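/- Let n ≥ 2 be an integer, let u, v ≥ 0 be real numbers, and let σ ≥ 1 satisfy (σ² + n−1)^{(n−2)/2}·(σ²−1) < σ^n. Set a = (σ² + n−1)^{(n−2)/2}·(σ²−1)/σ^n (so a < 1) and b = n·(σ² + n−1)^{(n−2)/2}/σ. Then (u² + (n−1)v²)^{n/2} ≥ a·u^n + b·u·v^{n−1}, with equality if and only if u = σ·v. -/

import Mathlib

open Real Set

noncomputable def stmt12eta (c x : ℝ) : ℝ := (1 + (c - 1) * x) ^ ((c - 2) / 2) * (1 - x)

lemma stmt12eta_hasDerivAt (c x : ℝ) (hx : 0 < 1 + (c - 1) * x) :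
    HasDerivAt (stmt12eta c)
      ((1 + (c - 1) * x) ^ ((c - 2) / 2 - 1) * (c / 2 * ((c - 3) - (c - 1) * x))) x := by
  have h1 : HasDerivAt (fun y : ℝ => 1 + (c - 1) * y) (c - 1) x := by
    simpa using ((hasDerivAt_id x).const_mul (c - 1)).const_add 1
  have h2 := h1.rpow_const (p := (c - 2) / 2) (Or.inl hx.ne')
  have h3 : HasDerivAt (fun y : ℝ => 1 - y) (-1 : ℝ) x := by
    simpa using (hasDerivAt_id x).const_sub 1
  have h4 := h2.mul h3
  have hP : (1 + (c - 1) * x) ^ ((c - 2) / 2)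
      = (1 + (c - 1) * x) ^ ((c - 2) / 2 - 1) * (1 + (c - 1) * x) := by
    conv_lhs => rw [show (c - 2) / 2 = ((c - 2) / 2 - 1) + 1 by ring]
    rw [Real.rpow_add_one hx.ne']
  have h5 : HasDerivAt (stmt12eta c)
      ((c - 1) * ((c - 2) / 2) * (1 + (c - 1) * x) ^ ((c - 2) / 2 - 1) * (1 - x)
        + (1 + (c - 1) * x) ^ ((c - 2) / 2) * (-1)) x := h4
  convert h5 using 1
  rw [hP]; ring

lemma stmt12eta_strictAntiOn (c : ℝ) (hc : 2 ≤ c) :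
    StrictAntiOn (stmt12eta c) (Ici (max 0 ((c - 3) / (c - 1)))) := by
  have hc1 : (0 : ℝ) < c - 1 := by linarith
  apply strictAntiOn_of_deriv_neg (convex_Ici _)
  · intro x hx
    have hx0 : 0 ≤ x := le_trans (le_max_left _ _) hx
    have hb : 0 < 1 + (c - 1) * x := by nlinarith
    exact (stmt12eta_hasDerivAt c x hb).continuousAt.continuousWithinAt
  · intro x hx
    rw [interior_Ici] at hx
    have hx0 : 0 < x := lt_of_le_of_lt (le_max_left _ _) hx
    have hb : 0 < 1 + (c - 1) * x := by nlinarith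
    rw [(stmt12eta_hasDerivAt c x hb).deriv]
    have h5 : (c - 3) - (c - 1) * x < 0 := by
      have h6 : (c - 3) / (c - 1) < x := lt_of_le_of_lt (le_max_right _ _) hx
      have := (div_lt_iff₀ hc1).mp h6
      linarith
    have h6 : 0 < (1 + (c - 1) * x) ^ ((c - 2) / 2 - 1) := Real.rpow_pos_of_pos hb _
    exact mul_neg_of_pos_of_neg h6 (mul_neg_of_pos_of_neg (by linarith) h5)

lemma stmt12eta_monotoneOn (c : ℝ) (hc : 2 ≤ c) :
    MonotoneOn (stmt12eta c) (Icc 0 (max 0 ((c - 3) / (c - 1)))) := by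
  have hc1 : (0 : ℝ) < c - 1 := by linarith
  apply monotoneOn_of_deriv_nonneg (convex_Icc _ _)
  · intro x hx
    have hx0 : 0 ≤ x := hx.1
    have hb : 0 < 1 + (c - 1) * x := by nlinarith
    exact (stmt12eta_hasDerivAt c x hb).continuousAt.continuousWithinAt
  · rw [interior_Icc]
    intro x hx
    have hb : 0 < 1 + (c - 1) * x := by nlinarith [hx.1]
    exact (stmt12eta_hasDerivAt c x hb).differentiableAt.differentiableWithinAt
  · rw [interior_Icc]
    intro x hx
    have hx0 : 0 < x := hx.1
    have hb : 0 < 1 + (c - 1) * x := by nlinarith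
    rw [(stmt12eta_hasDerivAt c x hb).deriv]
    have hmax : max 0 ((c - 3) / (c - 1)) = (c - 3) / (c - 1) := by
      rcases max_cases (0 : ℝ) ((c - 3) / (c - 1)) with ⟨h, _⟩ | ⟨h, _⟩
      · exfalso; rw [h] at hx; linarith [hx.2]
      · exact h
    have h5 : 0 ≤ (c - 3) - (c - 1) * x := by
      have h6 : x < (c - 3) / (c - 1) := by rw [← hmax]; exact hx.2
      have := (lt_div_iff₀ hc1).mp h6
      linarith
    have h6 : 0 ≤ (1 + (c - 1) * x) ^ ((c - 2) / 2 - 1) := (Real.rpow_pos_of_pos hb _).le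
    exact mul_nonneg h6 (mul_nonneg (by linarith) h5)

lemma stmt12eta_zero (c : ℝ) : stmt12eta c 0 = 1 := by simp [stmt12eta]

lemma stmt12eta_xstar_lt (c : ℝ) (hc : 2 ≤ c) (x₀ : ℝ) (hx₀ : 0 < x₀)
    (ha : stmt12eta c x₀ < 1) : max 0 ((c - 3) / (c - 1)) < x₀ := by
  by_contra h
  push_neg at h
  have h0 : stmt12eta c 0 ≤ stmt12eta c x₀ :=
    stmt12eta_monotoneOn c hc ⟨le_refl 0, le_max_left _ _⟩ ⟨hx₀.le, h⟩ hx₀.le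
  rw [stmt12eta_zero] at h0
  linarith

lemma stmt12eta_lt_of_gt (c : ℝ) (hc : 2 ≤ c) (x₀ x : ℝ) (hx₀ : 0 < x₀)
    (ha : stmt12eta c x₀ < 1) (hx : x₀ < x) : stmt12eta c x < stmt12eta c x₀ := by
  have h := stmt12eta_xstar_lt c hc x₀ hx₀ ha
  exact stmt12eta_strictAntiOn c hc h.le (le_trans h.le hx.le) hx

lemma stmt12eta_gt_of_lt (c : ℝ) (hc : 2 ≤ c) (x₀ x : ℝ) (hx₀ : 0 < x₀)
    (ha : stmt12eta c x₀ < 1) (hx0 : 0 < x) (hx : x < x₀) :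
    stmt12eta c x₀ < stmt12eta c x := by
  rcases le_or_gt (max 0 ((c - 3) / (c - 1))) x with h | h
  · exact stmt12eta_strictAntiOn c hc h (le_trans h hx.le) hx
  · have h1 : stmt12eta c 0 ≤ stmt12eta c x :=
      stmt12eta_monotoneOn c hc ⟨le_refl 0, le_max_left _ _⟩ ⟨hx0.le, h.le⟩ hx0.le
    rw [stmt12eta_zero] at h1
    linarith


lemma stmt12eta_inv_sq (n : ℕ) (hn : 2 ≤ n) (t : ℝ) (ht : 0 < t) :
    stmt12eta (n : ℝ) (1 / t ^ 2)
      = (t ^ 2 + (n : ℝ) - 1) ^ (((n : ℝ) - 2) / 2) * (t ^ 2 - 1) / t ^ n := by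
  have hc : (2 : ℝ) ≤ (n : ℝ) := by exact_mod_cast hn
  have ht2 : (0 : ℝ) < t ^ 2 := by positivity
  have hB : (0 : ℝ) < t ^ 2 + (n : ℝ) - 1 := by nlinarith
  have h1 : 1 + ((n : ℝ) - 1) * (1 / t ^ 2) = (t ^ 2 + (n : ℝ) - 1) / t ^ 2 := by
    field_simp; ring
  have h2 : 1 - 1 / t ^ 2 = (t ^ 2 - 1) / t ^ 2 := by field_simp
  have h3 : (t ^ 2) ^ (((n : ℝ) - 2) / 2) = t ^ ((n : ℝ) - 2) := by
    rw [← Real.rpow_natCast t 2, ← Real.rpow_mul ht.le]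
    congr 1; push_cast; ring
  have h4 : t ^ ((n : ℝ) - 2) * t ^ (2 : ℕ) = t ^ n := by
    rw [← Real.rpow_natCast t 2, ← Real.rpow_natCast t n, ← Real.rpow_add ht]
    congr 1; push_cast; ring
  rw [stmt12eta, h1, h2, Real.div_rpow hB.le ht2.le, h3]
  rw [div_mul_div_comm, eq_div_iff (by positivity), div_mul_eq_mul_div,
    div_eq_iff (by positivity), ← h4]

lemma stmt12phi_hasDerivAt (n : ℕ) (hn : 2 ≤ n) (a t : ℝ) (ht : 0 < t) :
    HasDerivAt (fun s : ℝ => (s ^ 2 + (n : ℝ) - 1) ^ ((n : ℝ) / 2) / s - a * s ^ (n - 1))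
      (((n : ℝ) - 1) * t ^ (n - 2) * (stmt12eta (n : ℝ) (1 / t ^ 2) - a)) t := by
  have hc : (2 : ℝ) ≤ (n : ℝ) := by exact_mod_cast hn
  have hB : (0 : ℝ) < t ^ 2 + (n : ℝ) - 1 := by nlinarith
  have h1 : HasDerivAt (fun s : ℝ => s ^ 2 + (n : ℝ) - 1) (2 * t) t := by
    simpa using ((hasDerivAt_pow 2 t).add_const ((n : ℝ))).sub_const 1
  have h2 := h1.rpow_const (p := (n : ℝ) / 2) (Or.inl hB.ne')
  have h3 := h2.div (hasDerivAt_id t) ht.ne'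
  have h4 : HasDerivAt (fun s : ℝ => a * s ^ (n - 1))
      (a * (((n : ℝ) - 1) * t ^ (n - 2))) t := by
    have := (hasDerivAt_pow (n - 1) t).const_mul a
    have hcast : ((n - 1 : ℕ) : ℝ) = (n : ℝ) - 1 := by
      have : (1 : ℕ) ≤ n := by omega
      push_cast [Nat.cast_sub this]; ring
    have hee : n - 1 - 1 = n - 2 := by omega
    rw [hcast, hee] at this
    exact this
  have h5 := h3.sub h4
  refine h5.congr_deriv (Eq.symm ?_)
  have hPm : (t ^ 2 + (n : ℝ) - 1) ^ ((n : ℝ) / 2)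
      = (t ^ 2 + (n : ℝ) - 1) ^ ((n : ℝ) / 2 - 1) * (t ^ 2 + (n : ℝ) - 1) := by
    conv_lhs => rw [show (n : ℝ) / 2 = ((n : ℝ) / 2 - 1) + 1 by ring]
    rw [Real.rpow_add_one hB.ne']
  have hexp : (n : ℝ) / 2 - 1 = ((n : ℝ) - 2) / 2 := by ring
  have heta := stmt12eta_inv_sq n hn t ht
  have htn : t ^ n = t ^ (n - 2) * t ^ 2 := by
    rw [← pow_add]; congr 1; omega
  rw [heta, hPm, hexp, htn, id_eq]
  field_simp
  ring

lemma stmt12core (n : ℕ) (hn : 2 ≤ n) (σ : ℝ) (hσ : 1 ≤ σ)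
    (ha : (σ ^ 2 + (n : ℝ) - 1) ^ (((n : ℝ) - 2) / 2) * (σ ^ 2 - 1) < σ ^ n)
    (t : ℝ) (ht : 0 ≤ t) :
    (σ ^ 2 + (n : ℝ) - 1) ^ (((n : ℝ) - 2) / 2) * (σ ^ 2 - 1) / σ ^ n * t ^ n
        + (n : ℝ) * (σ ^ 2 + (n : ℝ) - 1) ^ (((n : ℝ) - 2) / 2) / σ * t
      ≤ (t ^ 2 + (n : ℝ) - 1) ^ ((n : ℝ) / 2) ∧
    ((t ^ 2 + (n : ℝ) - 1) ^ ((n : ℝ) / 2)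
        = (σ ^ 2 + (n : ℝ) - 1) ^ (((n : ℝ) - 2) / 2) * (σ ^ 2 - 1) / σ ^ n * t ^ n
          + (n : ℝ) * (σ ^ 2 + (n : ℝ) - 1) ^ (((n : ℝ) - 2) / 2) / σ * t
      ↔ t = σ) := by
  have hσ0 : (0 : ℝ) < σ := lt_of_lt_of_le one_pos hσ
  have hc : (2 : ℝ) ≤ (n : ℝ) := by exact_mod_cast hn
  set K := (σ ^ 2 + (n : ℝ) - 1) ^ (((n : ℝ) - 2) / 2) with hK
  set a := K * (σ ^ 2 - 1) / σ ^ n with haa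
  set b := (n : ℝ) * K / σ with hbb
  have hBσ : (0 : ℝ) < σ ^ 2 + (n : ℝ) - 1 := by nlinarith
  have hKpos : 0 < K := Real.rpow_pos_of_pos hBσ _
  have ha1 : a < 1 := by
    rw [haa]
    exact (div_lt_one (by positivity)).mpr ha
  have haeta : stmt12eta (n : ℝ) (1 / σ ^ 2) = a := by
    rw [stmt12eta_inv_sq n hn σ hσ0, haa, hK]
  have haeta1 : stmt12eta (n : ℝ) (1 / σ ^ 2) < 1 := by rw [haeta]; exact ha1
  have hx₀ : (0 : ℝ) < 1 / σ ^ 2 := by positivity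
  set f : ℝ → ℝ := fun s => (s ^ 2 + (n : ℝ) - 1) ^ ((n : ℝ) / 2) / s - a * s ^ (n - 1)
    with hf
  -- strict antitone on (0, σ]
  have hanti : StrictAntiOn f (Ioc 0 σ) := by
    apply strictAntiOn_of_deriv_neg (convex_Ioc _ _)
    · intro s hs
      exact (stmt12phi_hasDerivAt n hn a s hs.1).continuousAt.continuousWithinAt
    · rw [interior_Ioc]
      intro s hs
      rw [(stmt12phi_hasDerivAt n hn a s hs.1).deriv]
      have hss : s ^ 2 < σ ^ 2 := by nlinarith [hs.1, hs.2]
      have hxx : 1 / σ ^ 2 < 1 / s ^ 2 := one_div_lt_one_div_of_lt (pow_pos hs.1 2) hss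
      have heta := stmt12eta_lt_of_gt (n : ℝ) hc (1 / σ ^ 2) (1 / s ^ 2) hx₀ haeta1 hxx
      rw [haeta] at heta
      have hp : 0 < ((n : ℝ) - 1) * s ^ (n - 2) := by
        have := pow_pos hs.1 (n - 2); nlinarith
      exact mul_neg_of_pos_of_neg hp (by linarith)
  -- strict monotone on [σ, ∞)
  have hmono : StrictMonoOn f (Ici σ) := by
    apply strictMonoOn_of_deriv_pos (convex_Ici _)
    · intro s hs
      have hs0 : 0 < s := lt_of_lt_of_le hσ0 hs
      exact (stmt12phi_hasDerivAt n hn a s hs0).continuousAt.continuousWithinAt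
    · rw [interior_Ici]
      intro s hs
      have hs0 : 0 < s := lt_trans hσ0 hs
      rw [(stmt12phi_hasDerivAt n hn a s hs0).deriv]
      have hss : σ ^ 2 < s ^ 2 := by
        have h7 : (0:ℝ) < (s - σ) * (s + σ) :=
          mul_pos (sub_pos.mpr hs) (by linarith)
        nlinarith [h7]
      have hxx : 1 / s ^ 2 < 1 / σ ^ 2 := one_div_lt_one_div_of_lt (by positivity) hss
      have heta := stmt12eta_gt_of_lt (n : ℝ) hc (1 / σ ^ 2) (1 / s ^ 2) hx₀ haeta1
        (by positivity) hxx
      rw [haeta] at heta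
      have hp : 0 < ((n : ℝ) - 1) * s ^ (n - 2) := by
        have := pow_pos hs0 (n - 2); nlinarith
      exact mul_pos hp (by linarith)
  have hsplit : (σ ^ 2 + (n : ℝ) - 1) ^ ((n : ℝ) / 2) = K * (σ ^ 2 + (n : ℝ) - 1) := by
    rw [hK]
    conv_lhs => rw [show (n : ℝ) / 2 = (((n : ℝ) - 2) / 2) + 1 by ring]
    rw [Real.rpow_add_one hBσ.ne']
  have hσn : σ ^ n = σ ^ (n - 1) * σ := by rw [← pow_succ]; congr 1; omega
  have hfσ : f σ = b := by
    rw [hf]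
    simp only
    rw [haa, hbb, hsplit, hσn]
    field_simp
    ring
  have hmin : ∀ s : ℝ, 0 < s → s ≠ σ → b < f s := by
    intro s hs hne
    rcases lt_or_gt_of_ne hne with h | h
    · have h2 := hanti ⟨hs, h.le⟩ ⟨hσ0, le_refl σ⟩ h
      rw [hfσ] at h2; exact h2
    · have h2 := hmono (le_refl σ) h.le h
      rw [hfσ] at h2; exact h2
  have hbridge : ∀ s : ℝ, 0 < s →
      (s ^ 2 + (n : ℝ) - 1) ^ ((n : ℝ) / 2) - (a * s ^ n + b * s) = s * (f s - b) := by
    intro s hs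
    rw [hf]
    simp only
    have hsn : s ^ n = s ^ (n - 1) * s := by rw [← pow_succ]; congr 1; omega
    rw [hsn]
    field_simp
    ring
  rcases eq_or_lt_of_le ht with h0 | h0
  · -- t = 0
    have ht0 : t = 0 := h0.symm
    subst ht0
    have hBn : (0 : ℝ) < (0 : ℝ) ^ 2 + (n : ℝ) - 1 := by nlinarith
    have hpos : 0 < ((0 : ℝ) ^ 2 + (n : ℝ) - 1) ^ ((n : ℝ) / 2) :=
      Real.rpow_pos_of_pos hBn _
    have hz : a * (0 : ℝ) ^ n + b * 0 = 0 := by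
      rw [zero_pow (by omega : n ≠ 0)]; ring
    rw [hz]
    constructor
    · exact hpos.le
    · constructor
      · intro h; exfalso; rw [h] at hpos; exact lt_irrefl 0 hpos
      · intro h; exact absurd h.symm hσ0.ne'
  · -- 0 < t
    have hd := hbridge t h0
    by_cases hte : t = σ
    · subst hte
      rw [hfσ] at hd
      have hzz : t * (b - b) = 0 := by ring
      have heq : (t ^ 2 + (n : ℝ) - 1) ^ ((n : ℝ) / 2) = a * t ^ n + b * t := by
        linarith
      exact ⟨heq.ge, fun _ => rfl, fun _ => heq⟩
    · have hft : b < f t := hmin t h0 hte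
      have hpos : 0 < t * (f t - b) := mul_pos h0 (by linarith)
      have hgt : 0 < (t ^ 2 + (n : ℝ) - 1) ^ ((n : ℝ) / 2) - (a * t ^ n + b * t) := by
        rw [hd]; exact hpos
      constructor
      · linarith
      · constructor
        · intro h; rw [h] at hgt; simp at hgt
        · intro h; exact absurd h hte

lemma stmt12_sq_rpow (n : ℕ) (hn : 2 ≤ n) (x : ℝ) (hx : 0 ≤ x) :
    (x ^ 2) ^ ((n : ℝ) / 2) = x ^ n := by
  rcases eq_or_lt_of_le hx with h | h
  · rw [← h]
    rw [show ((0:ℝ) ^ 2) = 0 by ring, Real.zero_rpow (by positivity : (n:ℝ)/2 ≠ 0),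
      zero_pow (by omega : n ≠ 0)]
  · rw [← Real.rpow_natCast x 2, ← Real.rpow_mul h.le, ← Real.rpow_natCast x n]
    congr 1; push_cast; ring

/-- Lemma 3.7. For `u, v ≥ 0` and `σ ≥ 1` with
`a = (σ² + n - 1)^{(n-2)/2}(σ² - 1)/σⁿ < 1` and `b = n(σ² + n - 1)^{(n-2)/2}/σ`,
one has `(u² + (n-1)v²)^{n/2} ≥ a uⁿ + b u v^{n-1}`, with equality iff `u = σv`. -/
theorem stmt12 (n : ℕ) (hn : 2 ≤ n) (u v σ : ℝ)
    (hu : 0 ≤ u) (hv : 0 ≤ v) (hσ : 1 ≤ σ)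
    (ha : (σ ^ 2 + (n : ℝ) - 1) ^ (((n : ℝ) - 2) / 2) * (σ ^ 2 - 1) < σ ^ n) :
    (σ ^ 2 + (n : ℝ) - 1) ^ (((n : ℝ) - 2) / 2) * (σ ^ 2 - 1) / σ ^ n * u ^ n
        + (n : ℝ) * (σ ^ 2 + (n : ℝ) - 1) ^ (((n : ℝ) - 2) / 2) / σ * (u * v ^ (n - 1))
      ≤ (u ^ 2 + ((n : ℝ) - 1) * v ^ 2) ^ ((n : ℝ) / 2) ∧
    ((u ^ 2 + ((n : ℝ) - 1) * v ^ 2) ^ ((n : ℝ) / 2)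
        = (σ ^ 2 + (n : ℝ) - 1) ^ (((n : ℝ) - 2) / 2) * (σ ^ 2 - 1) / σ ^ n * u ^ n
          + (n : ℝ) * (σ ^ 2 + (n : ℝ) - 1) ^ (((n : ℝ) - 2) / 2) / σ * (u * v ^ (n - 1))
      ↔ u = σ * v) := by
  have hσ0 : (0 : ℝ) < σ := lt_of_lt_of_le one_pos hσ
  have hc : (2 : ℝ) ≤ (n : ℝ) := by exact_mod_cast hn
  set K := (σ ^ 2 + (n : ℝ) - 1) ^ (((n : ℝ) - 2) / 2) with hK
  have hBσ : (0 : ℝ) < σ ^ 2 + (n : ℝ) - 1 := by nlinarith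
  have hKpos : 0 < K := Real.rpow_pos_of_pos hBσ _
  have ha1 : K * (σ ^ 2 - 1) / σ ^ n < 1 := (div_lt_one (by positivity)).mpr ha
  rcases eq_or_lt_of_le hv with hv0 | hv0
  · -- v = 0
    rw [← hv0]
    rw [zero_pow (by omega : n - 1 ≠ 0), mul_zero, mul_zero,
      show ((0:ℝ))^2 = 0 by ring, mul_zero, add_zero, add_zero,
      stmt12_sq_rpow n hn u hu, mul_zero]
    have hun : (0:ℝ) ≤ u ^ n := by positivity
    constructor
    · nlinarith
    · constructor
      · intro h
        have h2 : u ^ n * (1 - K * (σ ^ 2 - 1) / σ ^ n) = 0 := by linarith [h]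
        have h3 : u ^ n = 0 := by
          rcases mul_eq_zero.mp h2 with h4 | h4
          · exact h4
          · exfalso; nlinarith
        exact pow_eq_zero_iff (by omega : n ≠ 0) |>.mp h3
      · intro h
        rw [h, zero_pow (by omega : n ≠ 0), mul_zero]
  · -- 0 < v
    set t := u / v with htdef
    have ht : 0 ≤ t := div_nonneg hu hv0.le
    obtain ⟨h1, h2⟩ := stmt12core n hn σ hσ ha t ht
    have hu' : u = t * v := by
      rw [htdef, div_mul_cancel₀ _ hv0.ne']
    have hvn : (0:ℝ) < v ^ n := pow_pos hv0 n
    have e1 : u ^ 2 + ((n : ℝ) - 1) * v ^ 2 = v ^ 2 * (t ^ 2 + (n : ℝ) - 1) := by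
      rw [hu']; ring
    have hBt : (0:ℝ) ≤ t ^ 2 + (n : ℝ) - 1 := by nlinarith [sq_nonneg t]
    have e2 : (u ^ 2 + ((n : ℝ) - 1) * v ^ 2) ^ ((n : ℝ) / 2)
        = v ^ n * (t ^ 2 + (n : ℝ) - 1) ^ ((n : ℝ) / 2) := by
      rw [e1, Real.mul_rpow (by positivity) hBt, stmt12_sq_rpow n hn v hv0.le]
    have e3 : u ^ n = t ^ n * v ^ n := by rw [hu', mul_pow]
    have e4 : u * v ^ (n - 1) = t * v ^ n := by
      have hvv : v ^ (n - 1) * v = v ^ n := by rw [← pow_succ]; congr 1; omega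
      rw [hu', show t * v * v ^ (n - 1) = t * (v ^ (n - 1) * v) from by ring, hvv]
    rw [e2, e3, e4]
    have huσ : u = σ * v ↔ t = σ := by
      rw [hu']
      constructor
      · intro h; exact mul_right_cancel₀ hv0.ne' (by linarith [h] : t * v = σ * v)
      · intro h; rw [h]
    constructor
    · calc K * (σ ^ 2 - 1) / σ ^ n * (t ^ n * v ^ n)
            + (n : ℝ) * K / σ * (t * v ^ n)
          = (K * (σ ^ 2 - 1) / σ ^ n * t ^ n + (n : ℝ) * K / σ * t) * v ^ n := by ring
        _ ≤ (t ^ 2 + (n : ℝ) - 1) ^ ((n : ℝ) / 2) * v ^ n :=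
            mul_le_mul_of_nonneg_right h1 hvn.le
        _ = v ^ n * (t ^ 2 + (n : ℝ) - 1) ^ ((n : ℝ) / 2) := by ring
    · rw [huσ, ← h2]
      constructor
      · intro h
        have := mul_left_cancel₀ hvn.ne' (by linarith [h] :
          v ^ n * (t ^ 2 + (n : ℝ) - 1) ^ ((n : ℝ) / 2)
            = v ^ n * (K * (σ ^ 2 - 1) / σ ^ n * t ^ n + (n : ℝ) * K / σ * t))
        linarith [this]
      · intro h
        rw [h]; ring
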